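/- arXiv:1211.3322 — 3 statements merged into one kernel-verified Lean document; each statement's English description precedes it below -/
import Mathlib

section
/- Let A ∈ ℂ^{N×M} with N ≤ M. For k = 1,…,M, let I_k = {(k+i mod M)+1 : i ∈ [0, N−1]} be a cyclic sliding window of size N on {1,…,M}, and let A_{I_k} be the N×N submatrix of A with columns indexed by I_k. If rank(A_{I_k}) = N for some k ∈ [1,M], then ∑_{k=1}^{M} rank(A_{I_k}) ≥ N². -/
/-- The cyclic sliding window of size `N` on `{0,…,M-1}`: `win k i = (k + i) mod M`. -/
def win {M N : ℕ} (k : Fin M) (i : Fin N) : Fin M :=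
  ⟨((k : ℕ) + (i : ℕ)) % M, Nat.mod_lt _ k.pos⟩

open Matrix Submodule Module Finset

/-- If some cyclic window submatrix of size `N × N` of the `N × M` matrix `A`
(`N ≤ M`) has full rank `N`, then the ranks of all `M` window submatrices sum
to at least `N²`. -/
theorem sum_window_ranks_ge (N M : ℕ) (hNM : N ≤ M) (A : Matrix (Fin N) (Fin M) ℂ)
    (h : ∃ k : Fin M, (A.submatrix id (win (N:=N) k)).rank = N) :
    N ^ 2 ≤ ∑ k : Fin M, (A.submatrix id (win (N:=N) k)).rank := by
  obtain ⟨k0, hk0⟩ := h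
  haveI : NeZero M := ⟨k0.pos.ne'⟩
  have hwin_add : ∀ (k : Fin M) (i : Fin N), win k i = k + Fin.castLE hNM i := by
    intro k i
    apply Fin.ext
    simp [win, Fin.val_add]
  have hwin_inj : ∀ k : Fin M, Function.Injective (win (N:=N) k) := by
    intro k i i' hii
    rw [hwin_add, hwin_add] at hii
    exact Fin.castLE_injective hNM (add_left_cancel hii)
  classical
  set S : Fin M → Finset (Fin M) := fun k => Finset.image (win k) Finset.univ with hS
  have hScard : ∀ k, (S k).card = N := by
    intro k
    rw [hS]
    rw [Finset.card_image_of_injective _ (hwin_inj k), Finset.card_univ, Fintype.card_fin]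
  have hrank : ∀ (k : Fin M), (A.submatrix id (win (N:=N) k)).rank
      = finrank ℂ (span ℂ (Aᵀ '' (S k))) := by
    intro k
    rw [Matrix.rank_eq_finrank_span_cols]
    have hr : Set.range (A.submatrix id (win (N:=N) k)).col = Aᵀ '' ↑(S k) := by
      rw [show (A.submatrix id (win (N:=N) k)).col = Aᵀ ∘ (win k) from rfl]
      exact (Set.range_comp _ _).trans (by simp [hS])
    rw [hr]
  -- key inequality
  have key : ∀ k : Fin M, ((S k0) ∩ (S k)).card ≤ (A.submatrix id (win (N:=N) k)).rank := by
    intro k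
    set D := (S k0) ∩ (S k) with hD
    have hDsub : D ⊆ S k0 := Finset.inter_subset_left
    have hDcard : D.card ≤ N := by rw [← hScard k0]; exact Finset.card_le_card hDsub
    have h1 : (N : ℕ) ≤ finrank ℂ (span ℂ (Aᵀ '' (D : Set (Fin M)))) + (N - D.card) := by
      have hsplit : (S k0 : Set (Fin M)) = (D : Set (Fin M)) ∪ ((S k0 \ D : Finset (Fin M)) : Set (Fin M)) := by
        rw [← Finset.coe_union, Finset.union_sdiff_of_subset hDsub]
      have hle : span ℂ (Aᵀ '' (S k0 : Set (Fin M))) ≤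
          span ℂ (Aᵀ '' (D : Set (Fin M))) ⊔ span ℂ (Aᵀ '' ((S k0 \ D : Finset (Fin M)) : Set (Fin M))) := by
        rw [← Submodule.span_union]; exact le_of_eq (congrArg _ (by rw [hsplit]; exact Set.image_union _ _ _))
      have h2 : finrank ℂ (span ℂ (Aᵀ '' (S k0 : Set (Fin M)))) ≤
          finrank ℂ (span ℂ (Aᵀ '' (D : Set (Fin M)))) + finrank ℂ (span ℂ (Aᵀ '' ((S k0 \ D : Finset (Fin M)) : Set (Fin M)))) :=
        le_trans (Submodule.finrank_mono hle) (Submodule.finrank_add_le_finrank_add_finrank _ _)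
      have h3 : finrank ℂ (span ℂ (Aᵀ '' ((S k0 \ D : Finset (Fin M)) : Set (Fin M)))) ≤ N - D.card := by
        have h5 := finrank_span_finset_le_card (R := ℂ) ((S k0 \ D).image Aᵀ)
        rw [Set.finrank, show (((S k0 \ D).image Aᵀ : Finset _) : Set _) = Aᵀ '' ((S k0 \ D : Finset (Fin M)) : Set (Fin M)) from Finset.coe_image] at h5
        calc finrank ℂ (span ℂ (Aᵀ '' ((S k0 \ D : Finset (Fin M)) : Set (Fin M))))
            ≤ ((S k0 \ D).image Aᵀ).card := h5
          _ ≤ (S k0 \ D).card := Finset.card_image_le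
          _ = N - D.card := by rw [Finset.card_sdiff_of_subset hDsub, hScard k0]
      calc (N:ℕ) = finrank ℂ (span ℂ (Aᵀ '' (S k0 : Set (Fin M)))) := by rw [← hrank k0, hk0]
        _ ≤ _ := le_trans h2 (by omega)
    have h4 : D.card ≤ finrank ℂ (span ℂ (Aᵀ '' (D : Set (Fin M)))) := by omega
    refine le_trans h4 ?_
    rw [hrank k]
    exact Submodule.finrank_mono (Submodule.span_mono (Set.image_mono (by
      exact_mod_cast Finset.coe_subset.mpr Finset.inter_subset_right)))
  -- combinatorial count
  have hcount : ∀ j : Fin M, (Finset.univ.filter (fun k => j ∈ S k)).card = N := by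
    intro j
    have : Finset.univ.filter (fun k => j ∈ S k) = Finset.image (fun i : Fin N => j - Fin.castLE hNM i) Finset.univ := by
      ext k
      constructor
      · intro hk
        obtain ⟨-, hk⟩ := Finset.mem_filter.mp hk
        rw [hS] at hk
        obtain ⟨i, -, hi⟩ := Finset.mem_image.mp hk
        rw [hwin_add] at hi
        exact Finset.mem_image.mpr ⟨i, Finset.mem_univ _, (eq_sub_of_add_eq hi).symm⟩
      · intro hk
        obtain ⟨i, -, rfl⟩ := Finset.mem_image.mp hk
        refine Finset.mem_filter.mpr ⟨Finset.mem_univ _, ?_⟩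
        rw [hS]
        refine Finset.mem_image.mpr ⟨i, Finset.mem_univ _, ?_⟩
        rw [hwin_add]
        abel
    rw [this, Finset.card_image_of_injective, Finset.card_univ, Fintype.card_fin]
    intro a b hab
    exact Fin.castLE_injective hNM (sub_right_injective hab)
  have hsum : ∑ k : Fin M, ((S k0) ∩ (S k)).card = N ^ 2 := by
    have hc : ∀ k, ((S k0) ∩ (S k)).card = ∑ j ∈ S k0, (if j ∈ S k then 1 else 0) := by
      intro k
      rw [← Finset.filter_mem_eq_inter, Finset.card_filter]
    have hc2 : ∀ j ∈ S k0, (∑ k : Fin M, if j ∈ S k then 1 else 0) = N := by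
      intro j _
      rw [← hcount j, Finset.card_filter]
    rw [Finset.sum_congr rfl (fun k _ => hc k), Finset.sum_comm,
      Finset.sum_congr rfl hc2, Finset.sum_const, hScard k0, smul_eq_mul, sq]
  calc (N:ℕ)^2 = ∑ k : Fin M, ((S k0) ∩ (S k)).card := hsum.symm
    _ ≤ _ := Finset.sum_le_sum (fun k _ => key k)
end

section
/- Let S ∈ ℂ^{N×M} with singular value decomposition S = U Σ V_S^H where V_S ∈ ℂ^{M×N} has orthonormal columns, and let K ⪰ 0 be M×M. Then det(I + S K S^H) = det(I + Σ² V_S^H K V_S) ≤ ∏_{i=1}^{N} (1 + ‖S‖_F² λ_i(K)), where λ_1(K) ≥ … ≥ λ_N(K) are the N largest eigenvalues of K. -/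
open Matrix
open scoped ComplexOrder

open Matrix Finset Equiv Function
open Equiv.Perm

variable {R : Type*} [CommRing R]

namespace CBaux

open Classical in
noncomputable def smFinset (n m : ℕ) : Finset (Fin n → Fin m) :=
  Finset.univ.filter (fun g => StrictMono g)

theorem det_mul_aux' {n m : ℕ} {M : Matrix (Fin n) (Fin m) R} {N : Matrix (Fin m) (Fin n) R}
    {p : Fin n → Fin m} (H : ¬Injective p) :
    (∑ σ : Perm (Fin n), Perm.sign σ * ∏ x, M (σ x) (p x) * N (p x) x) = 0 := by
  obtain ⟨i, j, hpij, hij⟩ : ∃ i j, p i = p j ∧ i ≠ j := by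
    rw [Injective] at H
    push_neg at H
    obtain ⟨i, j, h1, h2⟩ := H
    exact ⟨i, j, h1, h2⟩
  exact
    Finset.sum_involution (fun σ _ => σ * Equiv.swap i j)
      (fun σ _ => by
        have : (∏ x, M (σ x) (p x)) = ∏ x, M ((σ * Equiv.swap i j) x) (p x) :=
          Fintype.prod_equiv (Equiv.swap i j) _ _ (by simp [Equiv.apply_swap_eq_self hpij])
        simp [this, Perm.sign_swap hij, -Perm.sign_swap', Finset.prod_mul_distrib])
      (fun σ _ _ => (not_congr Equiv.mul_swap_eq_iff).mpr hij) (fun _ _ => Finset.mem_univ _)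
      fun σ _ => Equiv.mul_swap_involutive i j σ

theorem det_expand {n m : ℕ} (M : Matrix (Fin n) (Fin m) R) (N : Matrix (Fin m) (Fin n) R) :
    det (M * N) = ∑ p : Fin n → Fin m, ∑ σ : Perm (Fin n),
      Perm.sign σ * ∏ i, M (σ i) (p i) * N (p i) i := by
  rw [det_apply']
  have : ∀ σ : Perm (Fin n), (∏ i, (M * N) (σ i) i) =
      ∑ p : Fin n → Fin m, ∏ i, M (σ i) (p i) * N (p i) i := by
    intro σ
    simp only [Matrix.mul_apply]
    rw [Finset.prod_univ_sum]
    rw [Fintype.piFinset_univ]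
  simp only [this, Finset.mul_sum]
  rw [Finset.sum_comm]

end CBaux

namespace CBaux

theorem sum_perm_eq_det {n : ℕ} (M N : Matrix (Fin n) (Fin n) R) :
    (∑ τ : Perm (Fin n), ∑ σ : Perm (Fin n),
      Perm.sign σ * ∏ i, M (σ i) (τ i) * N (τ i) i) = det (M * N) := by
  classical
  rw [det_expand]
  rw [show (Finset.univ : Finset (Fin n → Fin n))
      = Finset.univ.filter (fun p => Injective p) ∪
        Finset.univ.filter (fun p => ¬ Injective p) by
    simp [Finset.filter_union_filter_not_eq]]
  rw [Finset.sum_union (Finset.disjoint_filter_filter_not _ _ _)]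
  have h2 : ∑ p ∈ Finset.univ.filter (fun p : Fin n → Fin n => ¬ Injective p),
      ∑ σ : Perm (Fin n), Perm.sign σ * ∏ i, M (σ i) (p i) * N (p i) i = 0 := by
    apply Finset.sum_eq_zero
    intro p hp
    exact det_mul_aux' (by simpa using hp)
  rw [h2, add_zero]
  symm
  apply Finset.sum_bij (fun (p : Fin n → Fin n) (h : p ∈ Finset.univ.filter _) =>
    Equiv.ofBijective p ((Finite.injective_iff_bijective).mp (by simpa using h)))
  · intro a ha; exact Finset.mem_univ _
  · intro a ha b hb h
    injection h
  · intro τ _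
    refine ⟨τ, by simpa using τ.injective, ?_⟩
    apply Equiv.coe_fn_injective
    rfl
  · intro p hp
    rfl

end CBaux

namespace CBaux

theorem strictMono_comp_unique {n m : ℕ} {g₁ g₂ : Fin n → Fin m} {τ₁ τ₂ : Perm (Fin n)}
    (h₁ : StrictMono g₁) (h₂ : StrictMono g₂) (h : g₁ ∘ τ₁ = g₂ ∘ τ₂) :
    g₁ = g₂ ∧ τ₁ = τ₂ := by
  have hr : Set.range g₁ = Set.range g₂ := by
    rw [← τ₁.surjective.range_comp g₁, ← τ₂.surjective.range_comp g₂, h]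
  haveI : WellFoundedLT (Fin n) := Finite.to_wellFoundedLT
  have hg : g₁ = g₂ := (h₁.range_inj h₂).mp hr
  subst hg
  refine ⟨rfl, ?_⟩
  apply Equiv.coe_fn_injective
  funext i
  exact h₁.injective (congrFun h i)

open Classical in
theorem det_mul_rect {n m : ℕ} (M : Matrix (Fin n) (Fin m) R) (N : Matrix (Fin m) (Fin n) R) :
    det (M * N) = ∑ g ∈ Finset.univ.filter (fun g : Fin n → Fin m => StrictMono g),
      det (M.submatrix id g) * det (N.submatrix g id) := by
  calc det (M * N)
      = ∑ p : Fin n → Fin m, ∑ σ : Perm (Fin n),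
          Perm.sign σ * ∏ i, M (σ i) (p i) * N (p i) i := det_expand M N
    _ = ∑ p ∈ Finset.univ.filter (fun p : Fin n → Fin m => Injective p),
          ∑ σ : Perm (Fin n), Perm.sign σ * ∏ i, M (σ i) (p i) * N (p i) i := by
        symm
        apply Finset.sum_subset (Finset.filter_subset _ _)
        intro p _ hp
        exact det_mul_aux' (by simpa using hp)
    _ = ∑ x ∈ (Finset.univ.filter (fun g : Fin n → Fin m => StrictMono g)) ×ˢ
          (Finset.univ : Finset (Perm (Fin n))),
          ∑ σ : Perm (Fin n), Perm.sign σ * ∏ i, M (σ i) ((x.1 ∘ x.2) i) * N ((x.1 ∘ x.2) i) i := by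
        apply Finset.sum_nbij' (fun p => (p ∘ Tuple.sort p, (Tuple.sort p)⁻¹))
          (fun x => x.1 ∘ x.2)
        · intro p hp
          have hpi : Injective p := by simpa using hp
          simp only [Finset.mem_product, Finset.mem_filter, Finset.mem_univ, true_and, and_true]
          exact (Tuple.monotone_sort p).strictMono_of_injective
            (hpi.comp (Tuple.sort p).injective)
        · intro x hx
          simp only [Finset.mem_filter, Finset.mem_univ, true_and]
          have hx1 : StrictMono x.1 := by
            simpa using (Finset.mem_product.mp hx).1
          exact hx1.injective.comp x.2.injective
        · intro p hp
          funext i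
          simp
        · intro x hx
          have hx1 : StrictMono x.1 := by
            simpa using (Finset.mem_product.mp hx).1
          have hinj : Injective (x.1 ∘ x.2) := hx1.injective.comp x.2.injective
          have hsm : StrictMono ((x.1 ∘ ⇑x.2) ∘ ⇑(Tuple.sort (x.1 ∘ ⇑x.2))) :=
            (Tuple.monotone_sort _).strictMono_of_injective
              (hinj.comp (Tuple.sort _).injective)
          have hcomp : ((x.1 ∘ ⇑x.2) ∘ ⇑(Tuple.sort (x.1 ∘ ⇑x.2)))
              ∘ ⇑((Tuple.sort (x.1 ∘ ⇑x.2))⁻¹) = x.1 ∘ ⇑x.2 := by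
            funext i; simp
          obtain ⟨hg, hτ⟩ := strictMono_comp_unique hsm hx1 hcomp
          exact Prod.ext hg hτ
        · intro p hp
          have h : (p ∘ ⇑(Tuple.sort p)) ∘ ⇑((Tuple.sort p)⁻¹) = p := by
            funext i; simp
          simp only [h]
    _ = ∑ g ∈ Finset.univ.filter (fun g : Fin n → Fin m => StrictMono g),
          ∑ τ : Perm (Fin n), ∑ σ : Perm (Fin n),
            Perm.sign σ * ∏ i, M (σ i) (g (τ i)) * N (g (τ i)) i := by
        rw [Finset.sum_product]
        rfl
    _ = ∑ g ∈ Finset.univ.filter (fun g : Fin n → Fin m => StrictMono g),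
          det (M.submatrix id g) * det (N.submatrix g id) := by
        apply Finset.sum_congr rfl
        intro g _
        rw [← Matrix.det_mul]
        exact sum_perm_eq_det (M.submatrix id g) (N.submatrix g id)

end CBaux

namespace CBaux
open scoped ComplexOrder

open Classical in
theorem det_diag_conj {n m : ℕ} (A : Matrix (Fin n) (Fin m) ℂ) (d : Fin m → ℂ) :
    det (A * Matrix.diagonal d * Aᴴ) =
      ∑ g ∈ Finset.univ.filter (fun g : Fin n → Fin m => StrictMono g),
        (∏ i, d (g i)) * (det (A.submatrix id g) * star (det (A.submatrix id g))) := by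
  rw [det_mul_rect]
  apply Finset.sum_congr rfl
  intro g _
  have h1 : (A * Matrix.diagonal d).submatrix id g
      = A.submatrix id g * Matrix.diagonal (fun i => d (g i)) := by
    ext i j
    simp [Matrix.mul_diagonal]
  have h2 : (Aᴴ).submatrix g id = (A.submatrix id g)ᴴ := by
    rw [← Matrix.conjTranspose_submatrix]
  rw [h1, h2, Matrix.det_mul, Matrix.det_diagonal, Matrix.det_conjTranspose]
  ring

open Classical in
theorem det_diag_conj_le {n m : ℕ} (A : Matrix (Fin n) (Fin m) ℂ) (hA : A * Aᴴ = 1)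
    (d : Fin m → ℝ) (hd : ∀ j, 0 ≤ d j) (c : ℝ)
    (hc : ∀ g : Fin n → Fin m, StrictMono g → (∏ i, d (g i)) ≤ c) :
    det (A * Matrix.diagonal (fun j => (d j : ℂ)) * Aᴴ) ≤ (c : ℂ) := by
  have hone : (1 : ℂ) = ∑ g ∈ Finset.univ.filter (fun g : Fin n → Fin m => StrictMono g),
      det (A.submatrix id g) * star (det (A.submatrix id g)) := by
    have := det_diag_conj A (fun _ => (1 : ℂ))
    simp only [Matrix.diagonal_one, Matrix.mul_one, hA, Finset.prod_const_one, one_mul] at this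
    simpa using this
  rw [det_diag_conj]
  calc ∑ g ∈ Finset.univ.filter (fun g : Fin n → Fin m => StrictMono g),
        (∏ i, ((d (g i) : ℂ))) * (det (A.submatrix id g) * star (det (A.submatrix id g)))
      ≤ ∑ g ∈ Finset.univ.filter (fun g : Fin n → Fin m => StrictMono g),
        (c : ℂ) * (det (A.submatrix id g) * star (det (A.submatrix id g))) := by
        apply Finset.sum_le_sum
        intro g hg
        apply mul_le_mul_of_nonneg_right
        · rw [← Complex.ofReal_prod]
          exact Complex.real_le_real.mpr (hc g (by simpa using hg))
        · exact mul_star_self_nonneg _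
    _ = (c : ℂ) := by
        rw [← Finset.mul_sum, ← hone, mul_one]

theorem one_le_det_one_add {n : ℕ} {Y : Matrix (Fin n) (Fin n) ℂ} (hY : Y.PosSemidef) :
    (1 : ℂ) ≤ det (1 + Y) := by
  set W : Matrix (Fin n) (Fin n) ℂ := (hY.1.eigenvectorUnitary : Matrix (Fin n) (Fin n) ℂ)
  have hWW : W * star W = 1 := Matrix.mem_unitaryGroup_iff.mp hY.1.eigenvectorUnitary.2
  have hWW' : star W * W = 1 := Matrix.mem_unitaryGroup_iff'.mp hY.1.eigenvectorUnitary.2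
  have hY' : 1 + Y = W * (1 + Matrix.diagonal (RCLike.ofReal ∘ hY.1.eigenvalues)) * star W := by
    conv_lhs => rw [hY.1.spectral_theorem]
    rw [Unitary.conjStarAlgAut_apply]
    rw [Matrix.mul_add, Matrix.add_mul, Matrix.mul_one, hWW]
  rw [hY', Matrix.det_mul, Matrix.det_mul, mul_comm, ← mul_assoc, ← Matrix.det_mul, hWW',
    Matrix.det_one, one_mul]
  have : (1 : Matrix (Fin n) (Fin n) ℂ) + Matrix.diagonal (RCLike.ofReal ∘ hY.1.eigenvalues)
      = Matrix.diagonal (fun i => ((1 + hY.1.eigenvalues i : ℝ) : ℂ)) := by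
    rw [← Matrix.diagonal_one, Matrix.diagonal_add]
    congr 1
    funext i
    simp
  rw [this, Matrix.det_diagonal, ← Complex.ofReal_prod]
  have h1 : (1 : ℝ) ≤ ∏ i, (1 + hY.1.eigenvalues i) := by
    have := Finset.prod_le_prod (s := Finset.univ) (f := fun _ : Fin n => (1 : ℝ))
      (g := fun i => 1 + hY.1.eigenvalues i) (fun i _ => zero_le_one)
      (fun i _ => le_add_of_nonneg_right (hY.eigenvalues_nonneg i))
    simpa using this
  calc (1 : ℂ) = ((1 : ℝ) : ℂ) := by norm_num
    _ ≤ _ := Complex.real_le_real.mpr h1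

open scoped MatrixOrder in
theorem psd_sqrt_exists {n : ℕ} {A : Matrix (Fin n) (Fin n) ℂ} (hA : A.PosSemidef) :
    ∃ Q : Matrix (Fin n) (Fin n) ℂ, Q.PosSemidef ∧ Q * Q = A :=
  ⟨CFC.sqrt A, (CFC.sqrt_nonneg A).posSemidef, CFC.sqrt_mul_sqrt_self A hA.nonneg⟩

theorem det_one_add_le {n : ℕ} {X Rm : Matrix (Fin n) (Fin n) ℂ}
    (hX : X.PosSemidef) (hR : Rm.PosSemidef) :
    det (1 + X) ≤ det (1 + X + Rm) := by
  have hP : (1 + X).PosDef := Matrix.PosDef.one.add_posSemidef hX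
  obtain ⟨Q, hQpsd, hQQ⟩ := psd_sqrt_exists hP.posSemidef
  have hdet : det Q * det Q = det (1 + X) := by rw [← Matrix.det_mul, hQQ]
  have hdQ : IsUnit (det Q) := by
    rw [isUnit_iff_ne_zero]
    intro h
    have := hP.det_pos
    rw [← hdet, h, mul_zero] at this
    exact lt_irrefl _ this
  have hQi : Q * Q⁻¹ = 1 := Matrix.mul_nonsing_inv Q hdQ
  have hQi' : Q⁻¹ * Q = 1 := Matrix.nonsing_inv_mul Q hdQ
  have hQH : Qᴴ = Q := hQpsd.1
  have hQiH : (Q⁻¹)ᴴ = Q⁻¹ := by rw [Matrix.conjTranspose_nonsing_inv, hQH]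
  have hYpsd : ((Q⁻¹)ᴴ * Rm * Q⁻¹).PosSemidef := hR.conjTranspose_mul_mul_same _
  have hiden : 1 + X + Rm = Q * (1 + (Q⁻¹)ᴴ * Rm * Q⁻¹) * Q := by
    rw [Matrix.mul_add, Matrix.add_mul, Matrix.mul_one, hQQ, hQiH]
    congr 1
    symm
    calc Q * (Q⁻¹ * Rm * Q⁻¹) * Q = (Q * Q⁻¹) * Rm * (Q⁻¹ * Q) := by
          simp only [Matrix.mul_assoc]
      _ = Rm := by rw [hQi, hQi', Matrix.mul_one, Matrix.one_mul]
  rw [hiden, Matrix.det_mul, Matrix.det_mul]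
  have hre : det Q * det (1 + (Q⁻¹)ᴴ * Rm * Q⁻¹) * det Q
      = (det (1 + X)) * det (1 + (Q⁻¹)ᴴ * Rm * Q⁻¹) := by
    rw [← hdet]; ring
  rw [hre]
  calc det (1 + X) = det (1 + X) * 1 := by rw [mul_one]
    _ ≤ det (1 + X) * det (1 + (Q⁻¹)ᴴ * Rm * Q⁻¹) := by
        apply mul_le_mul_of_nonneg_left (one_le_det_one_add hYpsd) (le_of_lt hP.det_pos)

end CBaux

namespace CBaux

theorem fin_le_of_strictMono {n m : ℕ} {g : Fin n → Fin m} (hg : StrictMono g) (i : Fin n) :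
    (i : ℕ) ≤ (g i : ℕ) := by
  obtain ⟨k, hkn⟩ := i
  induction k with
  | zero => exact Nat.zero_le _
  | succ k ih =>
    have hk : k < n := Nat.lt_of_succ_lt hkn
    have h1 := ih hk
    have h2 : g ⟨k, hk⟩ < g ⟨k + 1, hkn⟩ := hg (by simp [Fin.lt_def])
    have h3 := Fin.lt_def.mp h2
    simp only [Fin.val_mk] at h1 h3 ⊢
    omega

open Classical in
theorem prod_le_top {Nn Mm : ℕ} (hNM : Nn ≤ Mm) (lam : Fin Mm → ℝ) (hlam : ∀ j, 0 ≤ lam j)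
    (t : ℝ) (ht : 0 ≤ t) (μ : Fin Mm → ℝ) (hmono : Antitone μ) (e : Equiv.Perm (Fin Mm))
    (he : μ = lam ∘ e) (g : Fin Nn → Fin Mm) (hg : StrictMono g) :
    (∏ i, (1 + t * lam (g i))) ≤ ∏ i : Fin Nn, (1 + t * μ (Fin.castLE hNM i)) := by
  have hμ0 : ∀ x, 0 ≤ μ x := fun x => by rw [he]; exact hlam _
  set f : Fin Nn → Fin Mm := fun i => e.symm (g i) with hf
  have hfinj : Function.Injective f := fun a b hab => hg.injective (e.symm.injective hab)
  have step1 : (∏ i, (1 + t * lam (g i))) = ∏ i, (1 + t * μ (f i)) := by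
    apply Finset.prod_congr rfl
    intro i _
    rw [he]
    simp [hf]
  set T : Finset (Fin Mm) := Finset.image f Finset.univ with hT
  have hTcard : T.card = Nn := by
    rw [hT, Finset.card_image_of_injective _ hfinj, Finset.card_univ, Fintype.card_fin]
  set g' := T.orderEmbOfFin hTcard with hg'
  have hg'm : StrictMono ⇑g' := g'.strictMono
  have hTim : Finset.image (⇑g') Finset.univ = T := by
    apply Finset.eq_of_subset_of_card_le
    · intro x hx
      obtain ⟨i, _, rfl⟩ := Finset.mem_image.mp hx
      have := Finset.orderEmbOfFin_mem T hTcard i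
      exact this
    · rw [Finset.card_image_of_injective _ g'.injective, Finset.card_univ, Fintype.card_fin,
        hTcard]
  have step2 : (∏ i, (1 + t * μ (f i))) = ∏ j ∈ T, (1 + t * μ j) :=
    (Finset.prod_image (s := Finset.univ) (g := f) (f := fun j => 1 + t * μ j)
      (fun a _ b _ h => hfinj h)).symm
  have step3 : (∏ j ∈ T, (1 + t * μ j)) = ∏ i, (1 + t * μ (g' i)) := by
    rw [← hTim]
    exact Finset.prod_image (s := Finset.univ) (g := ⇑g') (f := fun j => 1 + t * μ j)
      (fun a _ b _ h => g'.injective h)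
  rw [step1, step2, step3]
  apply Finset.prod_le_prod
  · intro i _
    have := hμ0 (g' i)
    nlinarith
  · intro i _
    have hle : Fin.castLE hNM i ≤ g' i := by
      rw [Fin.le_def]
      simpa using fin_le_of_strictMono hg'm i
    have := hmono hle
    nlinarith

end CBaux

open scoped ComplexOrder

set_option maxHeartbeats 1000000 in
/-- For `S = U Σ V_Sᴴ` (SVD, with `U` unitary, `Σ = diag(σ) ≥ 0`, and `V_S`
having orthonormal columns) and `K ⪰ 0`:
`det(I + S K Sᴴ) = det(I + Σ² V_Sᴴ K V_S) ≤ ∏ᵢ (1 + ‖S‖_F² λᵢ(K))`,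
where `μ = λ(K)` lists the eigenvalues of `K` in decreasing order and the
product is over the `N` largest ones.  The determinant of `I + S K Sᴴ` is real,
so the inequality is stated for its real part. -/
theorem det_one_add_SKSH_svd_bound (N M : ℕ) (hNM : N ≤ M)
    (S : Matrix (Fin N) (Fin M) ℂ) (U : Matrix (Fin N) (Fin N) ℂ)
    (σ : Fin N → ℝ) (hσ : ∀ i, 0 ≤ σ i)
    (VS : Matrix (Fin M) (Fin N) ℂ)
    (hU1 : Uᴴ * U = 1) (hU2 : U * Uᴴ = 1) (hVS : VSᴴ * VS = 1)
    (hS : S = U * Matrix.diagonal (fun i => (σ i : ℂ)) * VSᴴ)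
    (K : Matrix (Fin M) (Fin M) ℂ) (hK : K.PosSemidef)
    (μ : Fin M → ℝ) (hμmono : Antitone μ)
    (hμ : ∃ e : Equiv.Perm (Fin M), μ = hK.1.eigenvalues ∘ e) :
    (1 + S * K * Sᴴ).det =
        (1 + Matrix.diagonal (fun i => ((σ i : ℂ)) ^ 2) * (VSᴴ * K * VS)).det ∧
      (1 + S * K * Sᴴ).det.re ≤
        ∏ i : Fin N, (1 + (∑ a, ∑ b, ‖S a b‖ ^ 2) * μ (Fin.castLE hNM i)) := by
  set t : ℝ := ∑ a, ∑ b, ‖S a b‖ ^ 2 with ht_def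
  set D : Matrix (Fin N) (Fin N) ℂ := Matrix.diagonal (fun i => (σ i : ℂ)) with hD
  set D2 : Matrix (Fin N) (Fin N) ℂ := Matrix.diagonal (fun i => ((σ i : ℂ)) ^ 2) with hD2
  set Mq : Matrix (Fin N) (Fin N) ℂ := VSᴴ * K * VS with hMqdef
  have hSH : Sᴴ = VS * D * Uᴴ := by
    rw [hS]
    rw [Matrix.conjTranspose_mul, Matrix.conjTranspose_mul, Matrix.conjTranspose_conjTranspose,
      Matrix.diagonal_conjTranspose]
    have hst : star (fun i => (σ i : ℂ)) = fun i => (σ i : ℂ) := by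
      funext i
      simp
    rw [hst, Matrix.mul_assoc, ← hD]
  have hDD : D * D = D2 := by
    rw [hD, hD2, Matrix.diagonal_mul_diagonal]
    congr 1
    funext i
    ring
  have hSKS : S * K * Sᴴ = U * (D * Mq * D * Uᴴ) := by
    rw [hSH, hS, hMqdef]
    simp only [Matrix.mul_assoc]
  have E2 : (1 + S * K * Sᴴ).det = (1 + D * Mq * D).det := by
    rw [hSKS, Matrix.det_one_add_mul_comm]
    congr 2
    calc D * Mq * D * Uᴴ * U = D * Mq * D * (Uᴴ * U) := by simp only [Matrix.mul_assoc]
      _ = D * Mq * D := by rw [hU1, Matrix.mul_one]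
  have E34 : (1 + D * Mq * D).det = (1 + D2 * Mq).det := by
    calc (1 + D * Mq * D).det = (1 + D * (Mq * D)).det := by rw [Matrix.mul_assoc]
      _ = (1 + Mq * D * D).det := Matrix.det_one_add_mul_comm D (Mq * D)
      _ = (1 + Mq * D2).det := by rw [Matrix.mul_assoc, hDD]
      _ = (1 + D2 * Mq).det := Matrix.det_one_add_mul_comm Mq D2
  refine ⟨E2.trans E34, ?_⟩
  have ht0 : 0 ≤ t := by
    apply Finset.sum_nonneg
    intro a _
    apply Finset.sum_nonneg
    intro b _
    positivity
  have htrace : ((t : ℂ)) = ∑ i, ((σ i : ℂ)) ^ 2 := by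
    have h1 : ((t : ℂ)) = (S * Sᴴ).trace := by
      rw [Matrix.trace]
      push_cast [ht_def]
      apply Finset.sum_congr rfl
      intro a _
      rw [Matrix.diag_apply, Matrix.mul_apply]
      apply Finset.sum_congr rfl
      intro b _
      rw [Matrix.conjTranspose_apply]
      rw [show star (S a b) = (starRingEnd ℂ) (S a b) from rfl, Complex.mul_conj,
        Complex.normSq_eq_norm_sq]
      push_cast
      ring
    have h2 : S * Sᴴ = U * (D * D * Uᴴ) := by
      rw [hSH, hS]
      calc U * D * VSᴴ * (VS * D * Uᴴ) = U * (D * ((VSᴴ * VS) * (D * Uᴴ))) := by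
            simp only [Matrix.mul_assoc]
        _ = U * (D * D * Uᴴ) := by rw [hVS, Matrix.one_mul, Matrix.mul_assoc]
    rw [h1, h2, Matrix.trace_mul_comm, Matrix.mul_assoc, Matrix.trace_mul_comm, hU1,
      Matrix.one_mul, hDD, hD2, Matrix.trace_diagonal]
  have htsum : t = ∑ i, σ i ^ 2 := by
    have h3 := htrace
    rw [show (∑ i, ((σ i : ℂ)) ^ 2) = ((∑ i, σ i ^ 2 : ℝ) : ℂ) by push_cast; ring_nf] at h3
    exact_mod_cast h3
  have ht2 : ∀ i, σ i ^ 2 ≤ t := by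
    intro i
    rw [htsum]
    exact Finset.single_le_sum (f := fun i => σ i ^ 2) (fun j _ => sq_nonneg _)
      (Finset.mem_univ i)
  have hMq : Mq.PosSemidef := hK.conjTranspose_mul_mul_same VS
  obtain ⟨Q, hQpsd, hQH, hQQ⟩ : ∃ Q : Matrix (Fin N) (Fin N) ℂ,
      Q.PosSemidef ∧ Qᴴ = Q ∧ Q * Q = Mq :=
    by obtain ⟨Q, h1, h2⟩ := CBaux.psd_sqrt_exists hMq; exact ⟨Q, h1, h1.1, h2⟩
  have chain2 : (1 + D * Mq * D).det = (1 + Q * D2 * Q).det := by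
    calc (1 + D * Mq * D).det = (1 + (D * Q) * (Q * D)).det := by
          rw [← hQQ]; simp only [Matrix.mul_assoc]
      _ = (1 + (Q * D) * (D * Q)).det := Matrix.det_one_add_mul_comm (D * Q) (Q * D)
      _ = (1 + Q * D2 * Q).det := by rw [← hDD]; simp only [Matrix.mul_assoc]
  have hXpsd : (Q * D2 * Q).PosSemidef := by
    have hdiag : D2.PosSemidef := by
      rw [hD2]
      apply Matrix.PosSemidef.diagonal
      intro i
      show (0 : ℂ) ≤ ((σ i : ℂ)) ^ 2
      rw [show ((σ i : ℂ)) ^ 2 = ((σ i ^ 2 : ℝ) : ℂ) by push_cast; ring]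
      exact_mod_cast sq_nonneg (σ i)
    have h4 := hdiag.conjTranspose_mul_mul_same Q
    rwa [hQH] at h4
  have hRpsd : (Q * Matrix.diagonal (fun i => ((t - σ i ^ 2 : ℝ) : ℂ)) * Q).PosSemidef := by
    have hdiag : (Matrix.diagonal (fun i => ((t - σ i ^ 2 : ℝ) : ℂ))).PosSemidef := by
      apply Matrix.PosSemidef.diagonal
      intro i
      show (0 : ℂ) ≤ ((t - σ i ^ 2 : ℝ) : ℂ)
      have h5 : (0:ℝ) ≤ t - σ i ^ 2 := by linarith [ht2 i]
      exact_mod_cast h5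
    have h6 := hdiag.conjTranspose_mul_mul_same Q
    rwa [hQH] at h6
  have hsum : Q * D2 * Q + Q * Matrix.diagonal (fun i => ((t - σ i ^ 2 : ℝ) : ℂ)) * Q
      = (t : ℂ) • Mq := by
    rw [← Matrix.add_mul, ← Matrix.mul_add]
    have hds : D2 + Matrix.diagonal (fun i => ((t - σ i ^ 2 : ℝ) : ℂ))
        = Matrix.diagonal (fun _ => (t : ℂ)) := by
      rw [hD2, Matrix.diagonal_add]
      congr 1
      funext i
      push_cast
      ring
    rw [hds, ← Matrix.smul_one_eq_diagonal, Matrix.mul_smul, Matrix.mul_one,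
      Matrix.smul_mul, hQQ]
  have ineq1 : (1 + Q * D2 * Q).det ≤ (1 + (t : ℂ) • Mq).det := by
    have h7 := CBaux.det_one_add_le hXpsd hRpsd
    rwa [add_assoc, hsum] at h7
  -- spectral decomposition of K
  obtain ⟨W, hWW, hWK⟩ : ∃ W : Matrix (Fin M) (Fin M) ℂ, W * Wᴴ = 1 ∧
      W * Matrix.diagonal (RCLike.ofReal ∘ hK.1.eigenvalues) * Wᴴ = K := by
    refine ⟨(hK.1.eigenvectorUnitary : Matrix (Fin M) (Fin M) ℂ), ?_, ?_⟩
    · have h8 := Matrix.mem_unitaryGroup_iff.mp hK.1.eigenvectorUnitary.2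
      simpa [Matrix.star_eq_conjTranspose] using h8
    · have h9 := hK.1.spectral_theorem
      rw [Unitary.conjStarAlgAut_apply, Matrix.star_eq_conjTranspose] at h9
      exact h9.symm
  have hlam0 : ∀ j, 0 ≤ hK.1.eigenvalues j := hK.eigenvalues_nonneg
  have hAAH : (VSᴴ * W) * (VSᴴ * W)ᴴ = 1 := by
    rw [Matrix.conjTranspose_mul, Matrix.conjTranspose_conjTranspose]
    calc VSᴴ * W * (Wᴴ * VS) = VSᴴ * (W * Wᴴ) * VS := by simp only [Matrix.mul_assoc]
      _ = 1 := by rw [hWW, Matrix.mul_one, hVS]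
  have hdec : 1 + (t : ℂ) • Mq
      = (VSᴴ * W) * Matrix.diagonal (fun j => ((1 + t * hK.1.eigenvalues j : ℝ) : ℂ))
        * (VSᴴ * W)ᴴ := by
    have hdiagsplit : Matrix.diagonal (fun j => ((1 + t * hK.1.eigenvalues j : ℝ) : ℂ))
        = 1 + (t : ℂ) • Matrix.diagonal (RCLike.ofReal ∘ hK.1.eigenvalues) := by
      symm
      rw [← Matrix.diagonal_one, ← Matrix.diagonal_smul, Matrix.diagonal_add]
      refine congrArg Matrix.diagonal ?_
      funext j
      simp only [Pi.smul_apply, Function.comp_apply, smul_eq_mul]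
      push_cast
      norm_num [RCLike.ofReal]
    rw [hdiagsplit, Matrix.mul_add, Matrix.add_mul, Matrix.mul_one, hAAH]
    congr 1
    rw [Matrix.mul_smul, Matrix.smul_mul]
    congr 1
    rw [Matrix.conjTranspose_mul, Matrix.conjTranspose_conjTranspose, hMqdef]
    symm
    calc (VSᴴ : Matrix (Fin N) (Fin M) ℂ) * W *
          (Matrix.diagonal (RCLike.ofReal ∘ hK.1.eigenvalues) : Matrix (Fin M) (Fin M) ℂ) * (Wᴴ * VS)
        = VSᴴ * (W * Matrix.diagonal (RCLike.ofReal ∘ hK.1.eigenvalues) * Wᴴ) * VS := by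
          simp only [Matrix.mul_assoc]
      _ = VSᴴ * K * VS := by rw [hWK]
  obtain ⟨e, he⟩ := hμ
  have ineq2 : (1 + (t : ℂ) • Mq).det
      ≤ ((∏ i : Fin N, (1 + t * μ (Fin.castLE hNM i)) : ℝ) : ℂ) := by
    rw [hdec]
    apply CBaux.det_diag_conj_le (VSᴴ * W) hAAH (fun j => 1 + t * hK.1.eigenvalues j)
      (fun j => by have := hlam0 j; positivity)
    intro g hg
    exact CBaux.prod_le_top hNM hK.1.eigenvalues hlam0 t ht0 μ hμmono e he g hg
  have final : (1 + S * K * Sᴴ).det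
      ≤ ((∏ i : Fin N, (1 + t * μ (Fin.castLE hNM i)) : ℝ) : ℂ) := by
    rw [E2, chain2]
    exact le_trans ineq1 ineq2
  have hre := (Complex.le_def.mp final).1
  rwa [Complex.ofReal_re] at hre
end

section
/- BC achievability reduction (Lemma 1 decodability covers the outer bound): let M ≤ N_1+N_2, N_1, N_2 ≤ M, α_1, α_2 ∈ [0,1]. Define the power allocation map f_{d-A}: for each k ≠ j ∈ {1,2}, (A_k, A_k') is given by: if M = N_j then A_k = A_k' = d_k/M; if M > N_j and d_k < M − N_j α_j then A_k = (A_k' − α_j)^+ with A_k' = d_k/(M−N_j) when d_k < (M−N_j)α_j and A_k' = (d_k + N_j α_j)/M otherwise; if M > N_j and d_k ≥ M − N_j α_j then A_k' = 1 and A_k = (d_k − (M−N_j))/N_j. Then for every (d_1,d_2) in the outer bound region defined by d_k ≤ N_k, d_1+d_2 ≤ M, d_1/N_1 + d_2/M ≤ 1 + ((M−N_1)/M)α_1, d_1/M + d_2/N_2 ≤ 1 + ((M−N_2)/M)α_2, the resulting allocation satisfies 0 ≤ A_k ≤ A_k' ≤ 1, A_k ≥ A_k' − α_j, d_k = N_j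 A_k + (M−N_j)A_k', and the decodability conditions d_k/N_k ≤ 1 − A_j for k ≠ j ∈ {1,2}. -/
open scoped Classical

/-- The power-allocation map `f_{d-A}` of the BC achievability analysis:
given the parameters `M`, `N_j`, `α_j` and the target DoF `d_k`, it returns
the pair `(A_k, A_k')` of power exponents. -/
noncomputable def fdA (M Nj αj dk : ℝ) : ℝ × ℝ :=
  if M = Nj then (dk / M, dk / M)
  else if dk < M - Nj * αj then
    if dk < (M - Nj) * αj then
      (max (dk / (M - Nj) - αj) 0, dk / (M - Nj))
    else
      (max ((dk + Nj * αj) / M - αj) 0, (dk + Nj * αj) / M)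
  else ((dk - (M - Nj)) / Nj, 1)

lemma fdA_basic (M N α d : ℝ) (hN : 0 < N) (hNM : N ≤ M)
    (hα0 : 0 ≤ α) (hα1 : α ≤ 1) (hd0 : 0 ≤ d) (hdM : d ≤ M) :
    0 ≤ (fdA M N α d).1 ∧ (fdA M N α d).1 ≤ (fdA M N α d).2 ∧
    (fdA M N α d).2 ≤ 1 ∧ (fdA M N α d).2 - α ≤ (fdA M N α d).1 ∧
    d = N * (fdA M N α d).1 + (M - N) * (fdA M N α d).2 := by
  have hM : (0:ℝ) < M := lt_of_lt_of_le hN hNM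
  unfold fdA
  split_ifs with h1 h2 h3
  · refine ⟨by positivity, le_refl _, ?_, by simp; linarith, ?_⟩
    · exact div_le_one_of_le₀ hdM hM.le
    · subst h1; field_simp; ring
  · have hMN : N < M := lt_of_le_of_ne hNM (Ne.symm h1)
    have hs : (0:ℝ) < M - N := by linarith
    have hle : d / (M - N) ≤ α := by
      rw [div_le_iff₀ hs]; nlinarith
    refine ⟨le_max_right _ _, ?_, ?_, le_max_left _ _, ?_⟩
    · exact max_le (by linarith [le_refl (d / (M-N))] ; ) (by positivity)
    · rw [div_le_one hs]; nlinarith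
    · rw [max_eq_right (by linarith)]; field_simp; ring
  · have hMN : N < M := lt_of_le_of_ne hNM (Ne.symm h1)
    have hge : α ≤ (d + N * α) / M := by
      rw [le_div_iff₀ hM]; nlinarith [not_lt.mp h3]
    rw [max_eq_left (by linarith)]
    refine ⟨by linarith, by linarith [hα0], ?_, le_refl _, ?_⟩
    · rw [div_le_one hM]; linarith
    · field_simp; ring
  · have hMN : N < M := lt_of_le_of_ne hNM (Ne.symm h1)
    have h2' : M - N * α ≤ d := not_lt.mp h2
    refine ⟨?_, ?_, le_refl _, ?_, ?_⟩
    · apply div_nonneg _ hN.le; nlinarith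
    · rw [div_le_one hN]; linarith
    · rw [sub_le_iff_le_add, div_add' _ _ _ hN.ne', le_div_iff₀ hN]; nlinarith
    · field_simp; ring

lemma fdA_decod (M N α dj dk : ℝ) (hN : 0 < N) (hNM : N ≤ M)
    (hα0 : 0 ≤ α) (hα1 : α ≤ 1) (hdj0 : 0 ≤ dj) (hdkN : dk ≤ N)
    (hsum : dk + dj ≤ M)
    (hmix : dk / N + dj / M ≤ 1 + ((M - N) / M) * α) :
    dk / N ≤ 1 - (fdA M N α dj).1 := by
  have hM : (0:ℝ) < M := lt_of_lt_of_le hN hNM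
  unfold fdA
  split_ifs with h1 h2 h3
  · simp only
    have : ((M - N) / M) * α = 0 := by rw [h1]; simp
    linarith [this ▸ hmix]
  · have hMN : N < M := lt_of_le_of_ne hNM (Ne.symm h1)
    have hs : (0:ℝ) < M - N := by linarith
    have : dj / (M - N) ≤ α := by rw [div_le_iff₀ hs]; nlinarith
    rw [max_eq_right (by linarith)]
    simp only [sub_zero]
    exact div_le_one_of_le₀ hdkN hN.le
  · have hMN : N < M := lt_of_le_of_ne hNM (Ne.symm h1)
    have hge : α ≤ (dj + N * α) / M := by
      rw [le_div_iff₀ hM]; nlinarith [not_lt.mp h3]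
    rw [max_eq_left (by linarith)]
    have h : ((M - N) / M) * α = α - N * α / M := by field_simp
    have h2 : dj / M + N * α / M = (dj + N * α) / M := by ring
    linarith [hmix, h ▸ hmix]
  · simp only
    rw [le_sub_iff_add_le, ← add_div, div_le_one hN]
    linarith

/-- BC achievability reduction: for `N₁, N₂ ≤ M ≤ N₁ + N₂` and
`α₁, α₂ ∈ [0,1]`, every point `(d₁, d₂)` of the outer-bound region is mapped
by `f_{d-A}` to a power allocation `(A_k, A_k')` (for `k ≠ j ∈ {1,2}`,
`(A₁,A₁') = f_{d-A}(M, N₂, α₂, d₁)` and `(A₂,A₂') = f_{d-A}(M, N₁, α₁, d₂)`)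
satisfying `0 ≤ A_k ≤ A_k' ≤ 1`, `A_k ≥ A_k' − α_j`,
`d_k = N_j A_k + (M − N_j) A_k'`, and the decodability conditions
`d_k / N_k ≤ 1 − A_j`. -/
theorem bc_outer_bound_maps_into_decodability_region
    (M N₁ N₂ : ℕ) (hN₁ : 0 < N₁) (hN₂ : 0 < N₂)
    (hN₁M : N₁ ≤ M) (hN₂M : N₂ ≤ M) (hM : M ≤ N₁ + N₂)
    (α₁ α₂ d₁ d₂ : ℝ)
    (hα₁0 : 0 ≤ α₁) (hα₁1 : α₁ ≤ 1) (hα₂0 : 0 ≤ α₂) (hα₂1 : α₂ ≤ 1)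
    (hd₁0 : 0 ≤ d₁) (hd₂0 : 0 ≤ d₂)
    (hb₁ : d₁ ≤ (N₁ : ℝ)) (hb₂ : d₂ ≤ (N₂ : ℝ)) (hb₃ : d₁ + d₂ ≤ (M : ℝ))
    (hb₄ : d₁ / N₁ + d₂ / M ≤ 1 + (((M : ℝ) - N₁) / M) * α₁)
    (hb₅ : d₁ / M + d₂ / N₂ ≤ 1 + (((M : ℝ) - N₂) / M) * α₂)
    (A₁ A₁' A₂ A₂' : ℝ)
    (hp₁ : (A₁, A₁') = fdA (M : ℝ) (N₂ : ℝ) α₂ d₁)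
    (hp₂ : (A₂, A₂') = fdA (M : ℝ) (N₁ : ℝ) α₁ d₂) :
    (0 ≤ A₁ ∧ A₁ ≤ A₁' ∧ A₁' ≤ 1 ∧ A₁' - α₂ ≤ A₁ ∧
      d₁ = (N₂ : ℝ) * A₁ + ((M : ℝ) - N₂) * A₁' ∧ d₁ / N₁ ≤ 1 - A₂) ∧
    (0 ≤ A₂ ∧ A₂ ≤ A₂' ∧ A₂' ≤ 1 ∧ A₂' - α₁ ≤ A₂ ∧
      d₂ = (N₁ : ℝ) * A₂ + ((M : ℝ) - N₁) * A₂' ∧ d₂ / N₂ ≤ 1 - A₁) := by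
  have hN₁R : (0:ℝ) < N₁ := by exact_mod_cast hN₁
  have hN₂R : (0:ℝ) < N₂ := by exact_mod_cast hN₂
  have hN₁MR : (N₁:ℝ) ≤ M := by exact_mod_cast hN₁M
  have hN₂MR : (N₂:ℝ) ≤ M := by exact_mod_cast hN₂M
  have hd₁M : d₁ ≤ (M:ℝ) := le_trans hb₁ hN₁MR
  have hd₂M : d₂ ≤ (M:ℝ) := le_trans hb₂ hN₂MR
  have e₁ : A₁ = (fdA (M:ℝ) (N₂:ℝ) α₂ d₁).1 := by rw [← hp₁]
  have e₁' : A₁' = (fdA (M:ℝ) (N₂:ℝ) α₂ d₁).2 := by rw [← hp₁]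
  have e₂ : A₂ = (fdA (M:ℝ) (N₁:ℝ) α₁ d₂).1 := by rw [← hp₂]
  have e₂' : A₂' = (fdA (M:ℝ) (N₁:ℝ) α₁ d₂).2 := by rw [← hp₂]
  subst e₁ e₁' e₂ e₂'
  obtain ⟨q1, q2, q3, q4, q5⟩ := fdA_basic (M:ℝ) (N₂:ℝ) α₂ d₁ hN₂R hN₂MR hα₂0 hα₂1 hd₁0 hd₁M
  obtain ⟨r1, r2, r3, r4, r5⟩ := fdA_basic (M:ℝ) (N₁:ℝ) α₁ d₂ hN₁R hN₁MR hα₁0 hα₁1 hd₂0 hd₂M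
  refine ⟨⟨q1, q2, q3, q4, q5, ?_⟩, ⟨r1, r2, r3, r4, r5, ?_⟩⟩
  · exact fdA_decod (M:ℝ) (N₁:ℝ) α₁ d₂ d₁ hN₁R hN₁MR hα₁0 hα₁1 hd₂0 hb₁ hb₃ hb₄
  · exact fdA_decod (M:ℝ) (N₂:ℝ) α₂ d₁ d₂ hN₂R hN₂MR hα₂0 hα₂1 hd₁0 hb₂ (by linarith) (by linarith)
end
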